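/- Let M be a matroid on a finite ground set whose elements arrive in a fixed order e_1, e_2, ..., e_n, with a weight v(e_i) ≥ 0 attached to each element. Define sets S^0 = ∅ and, for k = 1, ..., n: if S^{k-1} ∪ {e_k} is independent in M, set S^k = S^{k-1} ∪ {e_k}; otherwise, let j be an element of minimum weight among those elements j' of S^{k-1} ∪ {e_k} such that S^{k-1} ∪ {e_k} \ {j'} is independent, and set S^k = S^{k-1} ∪ {e_k} \ {j} if v(j) < v(e_k), and S^k = S^{k-1} otherwise. Then for every k, the set S^k is a maximum-weight basis of the restriction of M to {e_1, ..., e_k}; in particular S^n is a maximum-weight basis of M. -/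

import Mathlib

open Set Finset

section Aux

variable {α : Type*} [DecidableEq α]

/-- Comparing sums from threshold counts. -/
lemma aux_sum_le_of_card_filter_le (v : α → ℝ) (hv : ∀ a, 0 ≤ v a) :
    ∀ (B' B : Finset α),
      (∀ s : ℝ, (B'.filter (fun x => s ≤ v x)).card ≤ (B.filter (fun x => s ≤ v x)).card) →
      ∑ a ∈ B', v a ≤ ∑ a ∈ B, v a := by
  intro B'
  induction B' using Finset.strongInduction with
  | _ B' ih =>
    intro B h
    rcases B'.eq_empty_or_nonempty with rfl | hne
    · simpa using Finset.sum_nonneg (fun a _ => hv a)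
    obtain ⟨x', hx', hmax⟩ := B'.exists_max_image v hne
    have hx'f : x' ∈ B'.filter (fun x => v x' ≤ v x) := by
      simp [hx']
    have hBf : (B.filter (fun x => v x' ≤ v x)).Nonempty := by
      rw [← Finset.card_pos]
      exact lt_of_lt_of_le (Finset.card_pos.mpr ⟨x', hx'f⟩) (h (v x'))
    obtain ⟨x, hxf⟩ := hBf
    have hxB : x ∈ B := (Finset.mem_filter.mp hxf).1
    have hxv : v x' ≤ v x := (Finset.mem_filter.mp hxf).2
    have key : ∀ s : ℝ, ((B'.erase x').filter (fun y => s ≤ v y)).card ≤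
        ((B.erase x).filter (fun y => s ≤ v y)).card := by
      intro s
      rw [Finset.filter_erase, Finset.filter_erase]
      by_cases hs : s ≤ v x'
      · have h1 : x' ∈ B'.filter (fun y => s ≤ v y) := by simp [hx', hs]
        have h2 : x ∈ B.filter (fun y => s ≤ v y) := by simp [hxB, hs.trans hxv]
        rw [Finset.card_erase_of_mem h1, Finset.card_erase_of_mem h2]
        exact Nat.sub_le_sub_right (h s) 1
      · have : B'.filter (fun y => s ≤ v y) = ∅ := by
          refine Finset.filter_eq_empty_iff.mpr fun y hy => ?_
          exact fun hsy => hs (hsy.trans (hmax y hy))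
        simp [this]
    have hih := ih (B'.erase x') (Finset.erase_ssubset hx') (B.erase x) key
    have e1 : ∑ a ∈ B', v a = v x' + ∑ a ∈ B'.erase x', v a :=
      (Finset.add_sum_erase _ _ hx').symm
    have e2 : ∑ a ∈ B, v a = v x + ∑ a ∈ B.erase x, v a :=
      (Finset.add_sum_erase _ _ hxB).symm
    rw [e1, e2]
    exact add_le_add hxv hih

/-- If `insert a S` is dependent but `S` is independent, any independent subset of
`insert a S` extends to `insert a S` minus one element. -/
lemma aux_exists_erase_indep {M : Matroid α} {Sk : Finset α} {a : α}
    (hS : M.Indep ↑Sk) (ha : a ∉ Sk) (haE : a ∈ M.E)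
    (hdep : ¬ M.Indep (insert a ↑Sk)) (I : Finset α) (hI : M.Indep ↑I)
    (hsub : I ⊆ insert a Sk) :
    ∃ f ∈ insert a Sk, f ∉ I ∧ M.Indep ↑((insert a Sk).erase f) := by
  have hground : (↑(insert a Sk) : Set α) ⊆ M.E := by
    rw [Finset.coe_insert]
    exact Set.insert_subset haE hS.subset_ground
  have hSb : M.IsBasis ↑Sk ↑(insert a Sk) := by
    refine hS.isBasis_of_forall_insert (by simp [Set.subset_insert]) fun y hy => ?_
    have hya : y = a := by
      rcases hy with ⟨hy1, hy2⟩
      rw [Finset.coe_insert] at hy1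
      exact hy1.resolve_right hy2
    subst hya
    exact Matroid.dep_iff.mpr ⟨hdep, Set.insert_subset haE hS.subset_ground⟩
  obtain ⟨J, hJb, hIJ⟩ := hI.subset_isBasis_of_subset (Finset.coe_subset.mpr hsub) hground
  have hcard : J.encard = (↑Sk : Set α).encard := hJb.encard_eq_encard hSb
  have hne : J ≠ ↑(insert a Sk) := by
    intro hJ
    exact hdep (by rw [← Finset.coe_insert, ← hJ]; exact hJb.indep)
  obtain ⟨f, hfT, hfJ⟩ := Set.exists_of_ssubset (hJb.subset.ssubset_of_ne hne)
  have hfT' : f ∈ insert a Sk := by exact_mod_cast hfT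
  refine ⟨f, hfT', fun hfI => hfJ (hIJ hfI), ?_⟩
  have hJsub : J ⊆ ↑((insert a Sk).erase f) := by
    rw [Finset.coe_erase]
    exact Set.subset_diff_singleton hJb.subset hfJ
  have hcard2 : (↑((insert a Sk).erase f) : Set α).encard ≤ J.encard := by
    rw [hcard, Set.encard_coe_eq_coe_finsetCard, Set.encard_coe_eq_coe_finsetCard,
      Finset.card_erase_of_mem hfT', Finset.card_insert_of_notMem ha]
    simp
  have : J = ↑((insert a Sk).erase f) :=
    (Finset.finite_toSet _).eq_of_subset_of_encard_le' hJsub hcard2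
  rw [← this]
  exact hJb.indep

/-- An independent subset of `X` with at least the cardinality of a basis of `X`
is itself a basis of `X`. -/
lemma aux_basis_of_indep_encard {M : Matroid α} {I J X : Set α}
    (hIb : M.IsBasis I X) (hJ : M.Indep J) (hJX : J ⊆ X) (hfin : J.Finite)
    (hcard : I.encard ≤ J.encard) : M.IsBasis J X := by
  obtain ⟨J', hJ'b, hJJ'⟩ := hJ.subset_isBasis_of_subset hJX hIb.subset_ground
  have hle : J'.encard ≤ J.encard := (hJ'b.encard_eq_encard hIb) ▸ hcard
  have : J = J' := hfin.eq_of_subset_of_encard_le hJJ' hle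
  rw [this]
  exact hJ'b

lemma aux_basis_insert_of_indep {M : Matroid α} {I Y : Set α} {a : α}
    (hIb : M.IsBasis I Y) (ha : M.Indep (insert a I)) :
    M.IsBasis (insert a I) (insert a Y) := by
  refine ha.isBasis_of_forall_insert (Set.insert_subset_insert hIb.subset) fun y hy => ?_
  obtain ⟨hy1, hy2⟩ := hy
  have hyY : y ∈ Y := hy1.resolve_left (fun h => hy2 (h ▸ Set.mem_insert _ _))
  have hyI : y ∉ I := fun h => hy2 (Set.mem_insert_of_mem _ h)
  exact (hIb.insert_dep ⟨hyY, hyI⟩).superset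
    (Set.insert_subset_insert (Set.subset_insert _ _))
    (Set.insert_subset (hIb.subset_ground hyY) ha.subset_ground)

lemma aux_basis_insert_of_dep {M : Matroid α} {I Y : Set α} {a : α}
    (hIb : M.IsBasis I Y) (ha : ¬ M.Indep (insert a I)) (haE : a ∈ M.E) :
    M.IsBasis I (insert a Y) := by
  refine hIb.indep.isBasis_of_forall_insert (hIb.subset.trans (Set.subset_insert _ _))
    fun y hy => ?_
  obtain ⟨hy1, hy2⟩ := hy
  rcases hy1 with rfl | hyY
  · exact Matroid.dep_iff.mpr ⟨ha, Set.insert_subset haE hIb.indep.subset_ground⟩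
  · exact hIb.insert_dep ⟨hyY, hy2⟩

lemma aux_sep_insert_pos (v : α → ℝ) (s : ℝ) {Y : Set α} {a : α} (h : s ≤ v a) :
    {x ∈ insert a Y | s ≤ v x} = insert a {x ∈ Y | s ≤ v x} := by
  ext x
  by_cases hx : x = a <;> simp [hx, h]

lemma aux_sep_insert_neg (v : α → ℝ) (s : ℝ) {Y : Set α} {a : α} (h : ¬ s ≤ v a) :
    {x ∈ insert a Y | s ≤ v x} = {x ∈ Y | s ≤ v x} := by
  ext x
  by_cases hx : x = a <;> simp [hx, h]

end Aux

/-- The greedy matroid algorithm (GMA) of the buyback problem maintains, after each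
arrival, a maximum-weight basis of the matroid restricted to the elements seen so far. -/
theorem stmt_0 {α : Type*} [DecidableEq α] (M : Matroid α) (n : ℕ)
    (e : Fin n → α) (he : Function.Injective e) (hE : M.E = Set.range e)
    (v : α → ℝ) (hv : ∀ a, 0 ≤ v a)
    (S : ℕ → Finset α) (hS0 : S 0 = ∅)
    (hstep : ∀ k : ℕ, ∀ hk : k < n,
      (M.Indep (insert (e ⟨k, hk⟩) ↑(S k)) → S (k + 1) = insert (e ⟨k, hk⟩) (S k)) ∧
      (¬ M.Indep (insert (e ⟨k, hk⟩) ↑(S k)) →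
        ∃ j ∈ insert (e ⟨k, hk⟩) (S k),
          M.Indep ↑((insert (e ⟨k, hk⟩) (S k)).erase j) ∧
          (∀ j' ∈ insert (e ⟨k, hk⟩) (S k),
            M.Indep ↑((insert (e ⟨k, hk⟩) (S k)).erase j') → v j ≤ v j') ∧
          (v j < v (e ⟨k, hk⟩) → S (k + 1) = (insert (e ⟨k, hk⟩) (S k)).erase j) ∧
          (¬ v j < v (e ⟨k, hk⟩) → S (k + 1) = S k))) :
    ∀ k ≤ n, M.IsBasis ↑(S k) (e '' {i : Fin n | (i : ℕ) < k}) ∧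
      ∀ B : Finset α, M.IsBasis ↑B (e '' {i : Fin n | (i : ℕ) < k}) →
        ∑ a ∈ B, v a ≤ ∑ a ∈ S k, v a := by
  classical
  set X : ℕ → Set α := fun m => e '' {i : Fin n | (i : ℕ) < m} with hXdef
  -- conversion lemmas at threshold 0
  have hfilter0 : ∀ F : Finset α, (F.filter fun x => (0:ℝ) ≤ v x) = F :=
    fun F => Finset.filter_true_of_mem fun x _ => hv x
  have hsep0 : ∀ Y : Set α, {x ∈ Y | (0:ℝ) ≤ v x} = Y :=
    fun Y => Set.sep_eq_self_iff_mem_true.mpr fun x _ => hv x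
  -- the key invariant
  have H : ∀ m ≤ n, ∀ s : ℝ,
      M.IsBasis ↑((S m).filter (fun x => s ≤ v x)) {x ∈ X m | s ≤ v x} := by
    intro m
    induction m with
    | zero =>
      intro _ s
      have hX0 : X 0 = ∅ := by
        simp [hXdef]
      rw [hS0, hX0]
      simp
    | succ m ih =>
      intro hm1 s
      have hm : m < n := Nat.lt_of_succ_le hm1
      have ihm := ih (le_of_lt hm)
      set a := e ⟨m, hm⟩ with ha_def
      have hXsucc : X (m + 1) = insert a (X m) := by
        ext x
        simp only [hXdef, Set.mem_image, Set.mem_setOf_eq, Set.mem_insert_iff]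
        constructor
        · rintro ⟨i, hi, rfl⟩
          rcases Nat.lt_succ_iff_lt_or_eq.mp hi with h | h
          · exact Or.inr ⟨i, h, rfl⟩
          · have hieq : i = ⟨m, hm⟩ := Fin.ext h
            exact Or.inl (congrArg e hieq)
        · rintro (rfl | ⟨i, hi, rfl⟩)
          · exact ⟨⟨m, hm⟩, Nat.lt_succ_self m, rfl⟩
          · exact ⟨i, Nat.lt_succ_of_lt hi, rfl⟩
      have haX : a ∉ X m := by
        rintro ⟨i, hi, hei⟩
        have := he hei
        subst this
        simp only [Set.mem_setOf_eq] at hi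
        omega
      have haE : a ∈ M.E := by
        rw [hE]; exact Set.mem_range_self _
      have hSbasis : M.IsBasis ↑(S m) (X m) := by
        have := ihm 0
        rwa [hfilter0, hsep0] at this
      have hSkX : (↑(S m) : Set α) ⊆ X m := hSbasis.subset
      have haSm : a ∉ S m := fun h => haX (hSkX h)
      obtain ⟨h1, h2⟩ := hstep m hm
      rw [hXsucc]
      by_cases hind : M.Indep (insert a ↑(S m))
      · -- new element keeps independence : S (m+1) = insert a (S m)
        rw [h1 hind, Finset.filter_insert]
        by_cases hsa : s ≤ v a
        · rw [if_pos hsa, aux_sep_insert_pos v s hsa, Finset.coe_insert]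
          refine aux_basis_insert_of_indep (ihm s) ?_
          refine hind.subset ?_
          exact Set.insert_subset_insert (Finset.coe_subset.mpr (Finset.filter_subset _ _))
        · rw [if_neg hsa, aux_sep_insert_neg v s hsa]
          exact ihm s
      · obtain ⟨j, hjT, hjind, hjmin, hswap, hkeep⟩ := h2 hind
        -- dependence of the filtered insert below the swap threshold
        have hins_dep : ∀ s' : ℝ, s' ≤ v j →
            ¬ M.Indep (insert a ↑((S m).filter (fun x => s' ≤ v x))) := by
          intro s' hs' hcon
          have hIcoe : M.Indep ↑(insert a ((S m).filter (fun x => s' ≤ v x))) := by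
            rwa [Finset.coe_insert]
          obtain ⟨f, hfT, hfI, hferase⟩ := aux_exists_erase_indep hSbasis.indep haSm haE
            hind (insert a ((S m).filter (fun x => s' ≤ v x))) hIcoe
            (Finset.insert_subset_insert _ (Finset.filter_subset _ _))
          have hfa : f ≠ a := fun h => hfI (h ▸ Finset.mem_insert_self _ _)
          have hfS : f ∈ S m := (Finset.mem_insert.mp hfT).resolve_left hfa
          have hfv : v f < s' := by
            by_contra hge
            exact hfI (Finset.mem_insert_of_mem (Finset.mem_filter.mpr
              ⟨hfS, not_lt.mp hge⟩))
          have := hjmin f hfT hferase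
          linarith
        by_cases hlt : v j < v a
        · -- swap case : S (m+1) = (insert a (S m)).erase j
          rw [hswap hlt]
          have hja : j ≠ a := fun h => absurd hlt (by rw [h]; exact lt_irrefl _)
          have hjS : j ∈ S m := (Finset.mem_insert.mp hjT).resolve_left hja
          have hS'indep : M.Indep ↑((insert a (S m)).erase j) := hjind
          rw [Finset.filter_erase, Finset.filter_insert]
          by_cases hsa : s ≤ v a
          · rw [if_pos hsa, aux_sep_insert_pos v s hsa]
            by_cases hsj : s ≤ v j
            · -- low threshold : must re-prove basis after the swap
              have hjf : j ∈ (S m).filter (fun x => s ≤ v x) :=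
                Finset.mem_filter.mpr ⟨hjS, hsj⟩
              have haf : a ∉ (S m).filter (fun x => s ≤ v x) :=
                fun h => haSm (Finset.mem_filter.mp h).1
              have hdepins := hins_dep s hsj
              have hSfb : M.IsBasis ↑((S m).filter (fun x => s ≤ v x))
                  (insert a {x ∈ X m | s ≤ v x}) :=
                aux_basis_insert_of_dep (ihm s) hdepins haE
              -- the candidate basis after the swap
              have hJsub : ((insert a ((S m).filter (fun x => s ≤ v x))).erase j)
                  ⊆ (insert a (S m)).erase j := by
                intro x hx
                obtain ⟨hxj, hxm⟩ := Finset.mem_erase.mp hx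
                exact Finset.mem_erase.mpr ⟨hxj,
                  Finset.insert_subset_insert _ (Finset.filter_subset _ _) hxm⟩
              have hJindep : M.Indep ↑((insert a ((S m).filter (fun x => s ≤ v x))).erase j) :=
                hS'indep.subset (Finset.coe_subset.mpr hJsub)
              have hJX : (↑((insert a ((S m).filter (fun x => s ≤ v x))).erase j) : Set α)
                  ⊆ insert a {x ∈ X m | s ≤ v x} := by
                intro x hx
                rw [Finset.coe_erase] at hx
                obtain ⟨hx1, _⟩ := hx
                rw [Finset.coe_insert] at hx1
                rcases hx1 with rfl | hx1
                · exact Set.mem_insert _ _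
                · refine Set.mem_insert_of_mem _ ?_
                  obtain ⟨hxS, hxs⟩ := Finset.mem_filter.mp hx1
                  exact ⟨hSkX hxS, hxs⟩
              have hcard : (↑((S m).filter (fun x => s ≤ v x)) : Set α).encard ≤
                  (↑((insert a ((S m).filter (fun x => s ≤ v x))).erase j) : Set α).encard := by
                rw [Set.encard_coe_eq_coe_finsetCard, Set.encard_coe_eq_coe_finsetCard,
                  Finset.card_erase_of_mem (Finset.mem_insert_of_mem hjf),
                  Finset.card_insert_of_notMem haf]
                simp
              exact aux_basis_of_indep_encard hSfb hJindep hJX (Finset.finite_toSet _) hcard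
            · -- middle threshold : j is filtered out anyway
              have hjerase : (insert a ((S m).filter (fun x => s ≤ v x))).erase j
                  = insert a ((S m).filter (fun x => s ≤ v x)) := by
                refine Finset.erase_eq_of_notMem ?_
                intro h
                rcases Finset.mem_insert.mp h with h' | h'
                · exact hja h'
                · exact hsj (Finset.mem_filter.mp h').2
              rw [hjerase, Finset.coe_insert]
              refine aux_basis_insert_of_indep (ihm s) ?_
              refine hS'indep.subset ?_
              intro x hx
              rcases hx with rfl | hx
              · exact_mod_cast Finset.mem_erase.mpr ⟨Ne.symm hja, Finset.mem_insert_self _ _⟩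
              · have hx' : x ∈ (S m).filter (fun x => s ≤ v x) := by exact_mod_cast hx
                obtain ⟨hxS, hxs⟩ := Finset.mem_filter.mp hx'
                have hxj : x ≠ j := fun h => hsj (h ▸ hxs)
                exact_mod_cast Finset.mem_erase.mpr ⟨hxj, Finset.mem_insert_of_mem hxS⟩
          · -- high threshold : both a and j are filtered out
            have hsj : ¬ s ≤ v j := fun h => hsa (h.trans hlt.le)
            rw [if_neg hsa, aux_sep_insert_neg v s hsa]
            have : ((S m).filter (fun x => s ≤ v x)).erase j
                = (S m).filter (fun x => s ≤ v x) := by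
              refine Finset.erase_eq_of_notMem ?_
              intro h
              exact hsj (Finset.mem_filter.mp h).2
            rw [this]
            exact ihm s
        · -- keep case : S (m+1) = S m
          rw [hkeep hlt]
          have hva_le : v a ≤ v j := not_lt.mp hlt
          by_cases hsa : s ≤ v a
          · rw [aux_sep_insert_pos v s hsa]
            exact aux_basis_insert_of_dep (ihm s) (hins_dep s (hsa.trans hva_le)) haE
          · rw [aux_sep_insert_neg v s hsa]
            exact ihm s
  -- extract the two conclusions
  intro k hk
  have hbasis : M.IsBasis ↑(S k) (X k) := by
    have := H k hk 0
    rwa [hfilter0, hsep0] at this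
  refine ⟨hbasis, fun B hB => ?_⟩
  refine aux_sum_le_of_card_filter_le v hv B (S k) (fun s => ?_)
  have hBs := H k hk s
  have hi : M.Indep ↑(B.filter (fun x => s ≤ v x)) :=
    hB.indep.subset (Finset.coe_subset.mpr (Finset.filter_subset _ _))
  have hsub : (↑(B.filter (fun x => s ≤ v x)) : Set α) ⊆ {x ∈ X k | s ≤ v x} := by
    intro x hx
    have hx' : x ∈ B.filter (fun x => s ≤ v x) := by exact_mod_cast hx
    obtain ⟨hxB, hxs⟩ := Finset.mem_filter.mp hx'
    exact ⟨hB.subset hxB, hxs⟩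
  obtain ⟨J, hJb, hBJ⟩ := hi.subset_isBasis_of_subset hsub hBs.subset_ground
  have h1 : (↑(B.filter (fun x => s ≤ v x)) : Set α).encard ≤ J.encard :=
    Set.encard_mono hBJ
  have h2 : J.encard = (↑((S k).filter (fun x => s ≤ v x)) : Set α).encard :=
    hJb.encard_eq_encard hBs
  rw [h2, Set.encard_coe_eq_coe_finsetCard, Set.encard_coe_eq_coe_finsetCard] at h1
  exact_mod_cast h1
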